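/- For every inner product (unitary) category 𝕏, the adjoint operation f ↦ f* := φ_B f† φ_A^{-1} makes (𝕏, (−)*) a dagger category: (−)* is identity on objects, contravariant, and satisfies f** = f, 1* = 1, (fg)* = g*f*. -/
import Mathlib


open CategoryTheory

universe v u

/-- An (achiral) involutive category: a contravariant endofunctor `(−)†`
together with a natural isomorphism `ι : X → X††` satisfying `ι_{X†} ≫ (ι_X)† = 1`. -/
structure Involutive (C : Type u) [Category.{v} C] where
  dob : C → C
  dmap : ∀ {X Y : C}, (X ⟶ Y) → (dob Y ⟶ dob X)
  dmap_id : ∀ X : C, dmap (𝟙 X) = 𝟙 (dob X)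
  dmap_comp : ∀ {X Y Z : C} (f : X ⟶ Y) (g : Y ⟶ Z), dmap (f ≫ g) = dmap g ≫ dmap f
  ι : ∀ X : C, X ⟶ dob (dob X)
  ιinv : ∀ X : C, dob (dob X) ⟶ X
  ι_hom_inv : ∀ X : C, ι X ≫ ιinv X = 𝟙 X
  ι_inv_hom : ∀ X : C, ιinv X ≫ ι X = 𝟙 (dob (dob X))
  ι_natural : ∀ {X Y : C} (f : X ⟶ Y), f ≫ ι Y = ι X ≫ dmap (dmap f)
  ι_dagger : ∀ X : C, ι (dob X) ≫ dmap (ι X) = 𝟙 (dob X)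

/-- A unitary structure on an involutive category: isomorphisms `φ_X : X → X†`
with `φ_{X†} = (φ_X⁻¹)†` and `φ_X ≫ φ_{X†} = ι_X`. -/
structure UnitaryStruct {C : Type u} [Category.{v} C] (D : Involutive C) where
  φ : ∀ X : C, X ⟶ D.dob X
  φinv : ∀ X : C, D.dob X ⟶ X
  φ_hom_inv : ∀ X : C, φ X ≫ φinv X = 𝟙 X
  φ_inv_hom : ∀ X : C, φinv X ≫ φ X = 𝟙 (D.dob X)
  u1 : ∀ X : C, φ (D.dob X) = D.dmap (φinv X)
  u2 : ∀ X : C, φ X ≫ φ (D.dob X) = D.ι X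

/-- An inner product combinator on an involutive category. -/
structure IPStruct {C : Type u} [Category.{v} C] (D : Involutive C) where
  ip : ∀ {A B X : C}, (A ⟶ X) → (B ⟶ X) → (A ⟶ D.dob B)

/-- The dual inner product `⟨h|k⟩^ι := ι_{A†} ≫ ⟨k†|h†⟩† ≫ ι_B⁻¹`. -/
def IPStruct.dual {C : Type u} [Category.{v} C] {D : Involutive C} (S : IPStruct D)
    {X A B : C} (h : X ⟶ A) (k : X ⟶ B) : D.dob A ⟶ B :=
  D.ι (D.dob A) ≫ D.dmap (S.ip (D.dmap k) (D.dmap h)) ≫ D.ιinv B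

/-- An inner product category: axioms [IP.1]–[IP.4]. -/
structure InnerProduct {C : Type u} [Category.{v} C] (D : Involutive C) extends IPStruct D where
  ip1 : ∀ {A B X Y Z : C} (f : A ⟶ X) (g : B ⟶ X) (h : Y ⟶ A) (k : Z ⟶ B),
    ip (h ≫ f) (k ≫ g) = h ≫ ip f g ≫ D.dmap k
  ip2a : ∀ {A B X : C} (f : A ⟶ X) (g : B ⟶ X),
    D.ι A ≫ toIPStruct.dual (D.dmap f) (D.dmap g) = ip f g
  ip2b : ∀ {A B X : C} (f : A ⟶ X) (g : B ⟶ X),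
    D.ι B ≫ D.dmap (ip f g) = ip g f
  ip3 : ∀ {A B X : C} (f : A ⟶ X) (g : B ⟶ X) (h k : X ⟶ B),
    h ≫ g = 𝟙 X → ip f g ≫ toIPStruct.dual h k = f ≫ k
  ip4 : ∀ {A X Z : C} (f : A ⟶ Z) (g : A ⟶ X) (h k : X ⟶ A),
    g ≫ h = 𝟙 A → toIPStruct.dual f g ≫ ip h k = D.dmap (k ≫ f)

/-- The inner product induced by a unitary structure: `⟨f|g⟩ := f ≫ φ_X ≫ g†`. -/
def UnitaryStruct.uip {C : Type u} [Category.{v} C] {D : Involutive C} (U : UnitaryStruct D)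
    {A B X : C} (f : A ⟶ X) (g : B ⟶ X) : A ⟶ D.dob B :=
  f ≫ U.φ X ≫ D.dmap g

/-- The dual inner product induced by a unitary structure. -/
def UnitaryStruct.udual {C : Type u} [Category.{v} C] {D : Involutive C} (U : UnitaryStruct D)
    {X A B : C} (h : X ⟶ A) (k : X ⟶ B) : D.dob A ⟶ B :=
  D.ι (D.dob A) ≫ D.dmap (U.uip (D.dmap k) (D.dmap h)) ≫ D.ιinv B

/-- The inner adjoint `f* := φ_B ≫ f† ≫ φ_A⁻¹` of `f : A ⟶ B`. -/
def UnitaryStruct.adj {C : Type u} [Category.{v} C] {D : Involutive C} (U : UnitaryStruct D)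
    {A B : C} (f : A ⟶ B) : B ⟶ A :=
  U.φ B ≫ D.dmap f ≫ U.φinv A

/-- For every inner product (unitary) category, the adjoint operation
`f ↦ f* := φ_B ≫ f† ≫ φ_A⁻¹` makes `(𝕏, (−)*)` a dagger category: `(−)*` is
identity on objects, contravariant, and satisfies `f** = f`, `1* = 1`,
`(fg)* = g* ≫ f*`. -/
theorem adjoint_gives_dagger_category {C : Type u} [Category.{v} C]
    (D : Involutive C) (U : UnitaryStruct D) :
    (∀ A : C, U.adj (𝟙 A) = 𝟙 A) ∧
    (∀ {A B E : C} (f : A ⟶ B) (g : B ⟶ E), U.adj (f ≫ g) = U.adj g ≫ U.adj f) ∧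
    (∀ {A B : C} (f : A ⟶ B), U.adj (U.adj f) = f) := by
  refine ⟨fun A => ?_, fun {A B E} f g => ?_, fun {A B} f => ?_⟩
  · simp [UnitaryStruct.adj, D.dmap_id, U.φ_hom_inv]
  · simp only [UnitaryStruct.adj, D.dmap_comp, Category.assoc]
    rw [show U.φinv B ≫ U.φ B ≫ D.dmap f ≫ U.φinv A = D.dmap f ≫ U.φinv A from by
      rw [← Category.assoc, U.φ_inv_hom]; simp]
  · have hdφ : D.dmap (U.φ B) = U.φinv (D.dob B) := by
      have h1 : U.φ (D.dob B) ≫ D.dmap (U.φ B) = 𝟙 (D.dob B) := by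
        rw [U.u1]
        rw [← D.dmap_comp, U.φ_hom_inv, D.dmap_id]
      calc D.dmap (U.φ B) = (U.φinv (D.dob B) ≫ U.φ (D.dob B)) ≫ D.dmap (U.φ B) := by
            rw [U.φ_inv_hom]; simp
        _ = U.φinv (D.dob B) ≫ (U.φ (D.dob B) ≫ D.dmap (U.φ B)) := by simp
        _ = U.φinv (D.dob B) := by rw [h1]; simp
    simp only [UnitaryStruct.adj, D.dmap_comp, Category.assoc]
    rw [← U.u1, hdφ]
    have h2 : U.φ A ≫ U.φ (D.dob A) ≫ D.dmap (D.dmap f) ≫ U.φinv (D.dob B) ≫ U.φinv B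
        = D.ι A ≫ D.dmap (D.dmap f) ≫ U.φinv (D.dob B) ≫ U.φinv B := by
      rw [← U.u2]; simp
    rw [h2, ← Category.assoc, ← D.ι_natural, Category.assoc]
    rw [show D.ι B ≫ U.φinv (D.dob B) ≫ U.φinv B = 𝟙 B from by
      rw [← U.u2, Category.assoc, show U.φ (D.dob B) ≫ U.φinv (D.dob B) ≫ U.φinv B
        = U.φinv B from by rw [← Category.assoc, U.φ_hom_inv]; simp, U.φ_hom_inv]]
    simp
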